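/- Let G_exp = ((V,R),E') be a bipartite (2k, d, ε/2)-expander with left vertex set V. For each v ∈ V fix an ordering of its d neighbors, and for i ∈ [d] and r ∈ R let V_{i,r} = {v ∈ V : the i-th neighbor of v is r}. Then the collection of partitionings {V_i = {V_{i,r} : r ∈ R} : i ∈ [d]} of V is (k,ε) matching preserving for any graph G on vertex set V: for every matching M of size k in G there exists i ∈ [d] such that the concatenation of G based on V_i has a matching of size at least (1−ε)·k. -/

import Mathlib

/-- Degree of a vertex `v` in an edge set `E`. -/
def degE {V : Type*} [Fintype V] [DecidableEq V] (E : Finset (Sym2 V)) (v : V) : ℕ :=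
  (E.filter (fun e => v ∈ e)).card

/-- A finite set of edges forms a matching: no loops and no two distinct edges share a vertex. -/
def IsMatching {V : Type*} [Fintype V] [DecidableEq V] (M : Finset (Sym2 V)) : Prop :=
  (∀ e ∈ M, ¬ e.IsDiag) ∧ ∀ e ∈ M, ∀ f ∈ M, e ≠ f → ∀ v : V, ¬ (v ∈ e ∧ v ∈ f)

instance {V : Type*} [Fintype V] [DecidableEq V] :
    DecidablePred (IsMatching (V := V)) := fun M => by
  unfold IsMatching; infer_instance

/-- Maximum matching size of the graph with edge set `E`. -/
def matchNum {V : Type*} [Fintype V] [DecidableEq V] (E : Finset (Sym2 V)) : ℕ :=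
  Finset.sup (E.powerset.filter (fun M => IsMatching M)) Finset.card

lemma card_filter_mem_sym2 {V : Type*} [Fintype V] [DecidableEq V] (e : Sym2 V)
    (h : ¬ e.IsDiag) : (Finset.univ.filter (· ∈ e)).card = 2 := by
  induction e using Sym2.ind with
  | _ a b =>
    rw [Sym2.mk_isDiag_iff] at h
    have : Finset.univ.filter (· ∈ s(a, b)) = {a, b} := by
      ext v; simp [Sym2.mem_iff]
    rw [this, Finset.card_insert_of_notMem (by simpa using h), Finset.card_singleton]

lemma sym2_map_inj_aux {V R : Type*} (g : V → R) (K : V → Prop)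
    (hK : ∀ v, K v → ∀ w, K w → g v = g w → v = w) (e f : Sym2 V)
    (he : ∀ v ∈ e, K v) (hf : ∀ v ∈ f, K v) (h : Sym2.map g e = Sym2.map g f) : e = f := by
  induction e using Sym2.ind with
  | _ a b =>
    induction f using Sym2.ind with
    | _ c d =>
      rw [Sym2.map_pair_eq, Sym2.map_pair_eq, Sym2.eq_iff] at h
      simp only [Sym2.mem_iff, forall_eq_or_imp, forall_eq] at he hf
      rw [Sym2.eq_iff]
      rcases h with ⟨h1, h2⟩ | ⟨h1, h2⟩
      · exact Or.inl ⟨hK _ he.1 _ hf.1 h1, hK _ he.2 _ hf.2 h2⟩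
      · exact Or.inr ⟨hK _ he.1 _ hf.2 h1, hK _ he.2 _ hf.1 h2⟩

lemma sym2_map_not_diag_aux {V R : Type*} (g : V → R) (K : V → Prop)
    (hK : ∀ v, K v → ∀ w, K w → g v = g w → v = w) (e : Sym2 V)
    (he : ∀ v ∈ e, K v) (hnd : ¬ e.IsDiag) : ¬ (Sym2.map g e).IsDiag := by
  induction e using Sym2.ind with
  | _ a b =>
    rw [Sym2.mk_isDiag_iff] at hnd
    rw [Sym2.map_pair_eq, Sym2.mk_isDiag_iff]
    simp only [Sym2.mem_iff, forall_eq_or_imp, forall_eq] at he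
    exact fun h => hnd (hK _ he.1 _ he.2 h)

theorem stmt3 {V R : Type*} [Fintype V] [DecidableEq V] [Fintype R] [DecidableEq R]
    (k d : ℕ) (ε : ℝ) (hd : 0 < d)
    (nbr : V → Fin d → R)
    (hdeg : ∀ v : V, Function.Injective (nbr v))
    (hexp : ∀ S : Finset V, S.card ≤ 2 * k →
      ((S.biUnion (fun v => Finset.image (nbr v) Finset.univ)).card : ℝ) ≥
        (1 - ε / 2) * d * S.card)
    (E M : Finset (Sym2 V)) (hME : M ⊆ E) (hM : IsMatching M) (hMk : M.card = k) :
    ∃ i : Fin d,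
      ((matchNum (E.image (Sym2.map (fun v => nbr v i))) : ℝ)) ≥ (1 - ε) * k := by
  classical
  rcases Nat.eq_zero_or_pos k with hk0 | hk
  · exact ⟨⟨0, hd⟩, by simp [hk0]⟩
  -- V is nonempty
  have hVne : Nonempty V := by
    obtain ⟨e, he⟩ := Finset.card_pos.mp (hMk ▸ hk : 0 < M.card)
    clear he
    induction e using Sym2.ind with
    | _ a b => exact ⟨a⟩
  -- the vertex set of the matching
  set S : Finset V := M.biUnion (fun e => Finset.univ.filter (· ∈ e)) with hSdef
  have hmemS : ∀ e ∈ M, ∀ v ∈ e, v ∈ S := by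
    intro e he v hv
    rw [hSdef]
    exact Finset.mem_biUnion.mpr ⟨e, he, Finset.mem_filter.mpr ⟨Finset.mem_univ v, hv⟩⟩
  have hScard : S.card = 2 * k := by
    rw [hSdef, Finset.card_biUnion]
    · rw [Finset.sum_congr rfl (fun e he => card_filter_mem_sym2 e (hM.1 e he)),
        Finset.sum_const, hMk, smul_eq_mul, mul_comm]
    · intro e he f hf hef
      rw [Function.onFun, Finset.disjoint_left]
      intro v hv hv'
      simp only [Finset.mem_filter] at hv hv'
      exact hM.2 e he f hf hef v ⟨hv.2, hv'.2⟩
  have hexpS := hexp S (le_of_eq hScard)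
  -- union bound over coordinates
  have hNle : ((S.biUnion (fun v => Finset.image (nbr v) Finset.univ)).card : ℕ) ≤
      ∑ i : Fin d, (S.image (fun v => nbr v i)).card := by
    have hU : S.biUnion (fun v => Finset.image (nbr v) Finset.univ) =
        Finset.univ.biUnion (fun i : Fin d => S.image (fun v => nbr v i)) := by
      ext r
      simp only [Finset.mem_biUnion, Finset.mem_image, Finset.mem_univ, true_and]
      tauto
    rw [hU]
    exact Finset.card_biUnion_le
  -- some coordinate loses at most ε k vertices
  have hdR : (0:ℝ) < d := by exact_mod_cast hd
  have hex : ∃ i : Fin d, ((2 * k : ℝ)) - ((S.image (fun v => nbr v i)).card : ℝ) ≤ ε * k := by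
    have hne : (Finset.univ : Finset (Fin d)).Nonempty := ⟨⟨0, hd⟩, Finset.mem_univ _⟩
    have hsum : ∑ i : Fin d, (((2 * k : ℝ)) - ((S.image (fun v => nbr v i)).card : ℝ)) ≤
        ∑ _i : Fin d, (ε * k : ℝ) := by
      rw [Finset.sum_sub_distrib, Finset.sum_const, Finset.sum_const, Finset.card_univ,
        Fintype.card_fin]
      have h1 : ((S.biUnion (fun v => Finset.image (nbr v) Finset.univ)).card : ℝ) ≤
          ∑ i : Fin d, ((S.image (fun v => nbr v i)).card : ℝ) := by
        exact_mod_cast hNle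
      rw [hScard] at hexpS
      push_cast
      push_cast at hexpS
      simp only [nsmul_eq_mul]
      nlinarith [hexpS, h1]
    obtain ⟨i, -, hi⟩ := Finset.exists_le_of_sum_le hne hsum
    exact ⟨i, hi⟩
  obtain ⟨i, hi⟩ := hex
  refine ⟨i, ?_⟩
  set g : V → R := fun v => nbr v i with hgdef
  set im : Finset R := S.image g with himdef
  -- choose representatives
  have hrep' : ∀ r : R, ∃ v : V, r ∈ im → (v ∈ S ∧ g v = r) := by
    intro r
    by_cases h : r ∈ im
    · obtain ⟨v, hv, hgv⟩ := Finset.mem_image.mp h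
      exact ⟨v, fun _ => ⟨hv, hgv⟩⟩
    · exact ⟨Classical.arbitrary V, fun hr => absurd hr h⟩
  choose rep hrep using hrep'
  set K : Finset V := S.filter (fun v => rep (g v) = v) with hKdef
  have hKsub : K ⊆ S := Finset.filter_subset _ _
  have hKinj : ∀ v ∈ K, ∀ w ∈ K, g v = g w → v = w := by
    intro v hv w hw hgvw
    have h1 := (Finset.mem_filter.mp hv).2
    have h2 := (Finset.mem_filter.mp hw).2
    rw [← h1, hgvw, h2]
  have hKcard : K.card = im.card := by
    have h1 : im = K.image g := by
      apply Finset.Subset.antisymm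
      · intro r hr
        have h2 := hrep r hr
        refine Finset.mem_image.mpr ⟨rep r, Finset.mem_filter.mpr ⟨h2.1, ?_⟩, h2.2⟩
        rw [h2.2]
      · intro r hr
        obtain ⟨v, hv, rfl⟩ := Finset.mem_image.mp hr
        exact Finset.mem_image.mpr ⟨v, hKsub hv, rfl⟩
    rw [h1, Finset.card_image_of_injOn
      (fun v hv w hw h => hKinj v (Finset.mem_coe.mp hv) w (Finset.mem_coe.mp hw) h)]
  -- the surviving part of the matching
  set M' : Finset (Sym2 V) := M.filter (fun e => ∀ v ∈ e, v ∈ K) with hM'def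
  have hM'sub : M' ⊆ M := Finset.filter_subset _ _
  have hM'K : ∀ e ∈ M', ∀ v ∈ e, v ∈ K := fun e he => (Finset.mem_filter.mp he).2
  have hdiffle : (M \ M').card ≤ (S \ K).card := by
    have hw : ∀ e : Sym2 V, ∃ v : V, e ∈ M \ M' → (v ∈ e ∧ v ∈ S \ K) := by
      intro e
      by_cases h : e ∈ M \ M'
      · have h1 := Finset.mem_sdiff.mp h
        have h2 : ¬ ∀ v ∈ e, v ∈ K := fun hall => h1.2 (Finset.mem_filter.mpr ⟨h1.1, hall⟩)
        push_neg at h2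
        obtain ⟨v, hv, hvK⟩ := h2
        exact ⟨v, fun _ => ⟨hv, Finset.mem_sdiff.mpr ⟨hmemS e h1.1 v hv, hvK⟩⟩⟩
      · exact ⟨Classical.arbitrary V, fun h' => absurd h' h⟩
    choose w hw using hw
    apply Finset.card_le_card_of_injOn w
    · intro e he
      exact (hw e he).2
    · intro e he f hf hef
      by_contra hne
      have h1 := hw e (Finset.mem_coe.mp he)
      have h2 := hw f (Finset.mem_coe.mp hf)
      have he' := (Finset.mem_sdiff.mp (Finset.mem_coe.mp he)).1
      have hf' := (Finset.mem_sdiff.mp (Finset.mem_coe.mp hf)).1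
      exact hM.2 e he' f hf' hne (w e) ⟨h1.1, hef ▸ h2.1⟩
  -- size of M' in the reals
  have hM'le : M'.card ≤ M.card := Finset.card_le_card hM'sub
  have hKle : K.card ≤ S.card := Finset.card_le_card hKsub
  have hMM' : (M \ M').card = M.card - M'.card := Finset.card_sdiff_of_subset hM'sub
  have hSK : (S \ K).card = S.card - K.card := Finset.card_sdiff_of_subset hKsub
  have hM'real : ((1 - ε) * k : ℝ) ≤ (M'.card : ℝ) := by
    have h1 : ((M \ M').card : ℝ) = (M.card : ℝ) - M'.card := by
      rw [hMM', Nat.cast_sub hM'le]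
    have h2 : ((S \ K).card : ℝ) = (S.card : ℝ) - K.card := by
      rw [hSK, Nat.cast_sub hKle]
    have h3 : ((M \ M').card : ℝ) ≤ ((S \ K).card : ℝ) := by exact_mod_cast hdiffle
    have h4 : ((S.card : ℝ)) = 2 * k := by exact_mod_cast hScard
    have h5 : ((K.card : ℝ)) = im.card := by exact_mod_cast hKcard
    rw [hMk] at h1
    nlinarith [hi, h1, h2, h3, h4, h5]
  -- the image of M' is a matching in the concatenated graph
  set Mi : Finset (Sym2 R) := M'.image (Sym2.map g) with hMidef
  have hMiE : Mi ⊆ E.image (Sym2.map g) :=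
    Finset.image_subset_image (fun e he => hME (hM'sub he))
  have hMicard : Mi.card = M'.card := by
    apply Finset.card_image_of_injOn
    intro e he f hf h
    exact sym2_map_inj_aux g (· ∈ K) (fun v hv w hw => hKinj v hv w hw) e f
      (hM'K e (Finset.mem_coe.mp he)) (hM'K f (Finset.mem_coe.mp hf)) h
  have hMiMatch : IsMatching Mi := by
    constructor
    · intro e' he'
      obtain ⟨e, he, rfl⟩ := Finset.mem_image.mp he'
      exact sym2_map_not_diag_aux g (· ∈ K) (fun v hv w hw => hKinj v hv w hw) e
        (hM'K e he) (hM.1 e (hM'sub he))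
    · intro e' he' f' hf' hne r hr
      obtain ⟨e, he, rfl⟩ := Finset.mem_image.mp he'
      obtain ⟨f, hf, rfl⟩ := Finset.mem_image.mp hf'
      obtain ⟨a, hae, hga⟩ := Sym2.mem_map.mp hr.1
      obtain ⟨b, hbf, hgb⟩ := Sym2.mem_map.mp hr.2
      have hab : a = b := hKinj a (hM'K e he a hae) b (hM'K f hf b hbf) (hga.trans hgb.symm)
      have hef : e ≠ f := fun h => hne (by rw [h])
      exact hM.2 e (hM'sub he) f (hM'sub hf) hef a ⟨hae, hab ▸ hbf⟩
  have hle : Mi.card ≤ matchNum (E.image (Sym2.map g)) :=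
    Finset.le_sup (Finset.mem_filter.mpr ⟨Finset.mem_powerset.mpr hMiE, hMiMatch⟩)
  calc ((1 - ε) * k : ℝ) ≤ (M'.card : ℝ) := hM'real
    _ = (Mi.card : ℝ) := by rw [hMicard]
    _ ≤ (matchNum (E.image (Sym2.map g)) : ℝ) := by exact_mod_cast hle
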